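/- Let 𝔳 = {ν_i}_{i∈I} be a totally ordered set in V with no maximal element such that at least one polynomial is not 𝔳-stable. Let Q be a monic polynomial of smallest degree that is not 𝔳-stable, take γ ∈ Γ ∪ {∞} with γ > ν_i(Q) for every i ∈ I, and let μ be the valuation defined by μ(f_0 + f_1 Q + … + f_r Q^r) = min_{0≤j≤r} {𝔳(f_j) + jγ} on Q-expansions. Fix i ∈ I and f ∈ K[x]. If ν_i(f) < μ(f), then ν_i(f) < ν_j(f) for every j > i. -/

import Mathlib

open Polynomial

/-- An additive valuation (possibly with nontrivial support) on a commutative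
ring `R`, with values in `Γ ∪ {∞}`. -/
structure ValOn (R : Type*) [CommRing R] (Γ : Type*) [AddCommGroup Γ] [LinearOrder Γ] [IsOrderedAddMonoid Γ] where
  v : R → WithTop Γ
  v_zero : v 0 = ⊤
  v_one : v 1 = 0
  v_mul : ∀ a b, v (a * b) = v a + v b
  min_le_v_add : ∀ a b, min (v a) (v b) ≤ v (a + b)

namespace ValOn

variable {R : Type*} [CommRing R] {Γ : Type*} [AddCommGroup Γ] [LinearOrder Γ] [IsOrderedAddMonoid Γ]

theorem v_neg (w : ValOn R Γ) (a : R) : w.v (-a) = w.v a := by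
  have h1 : w.v (-1) + w.v (-1) = 0 := by
    rw [← w.v_mul]; norm_num [w.v_one]
  have h2 : w.v (-1) = 0 := by
    cases hx : w.v (-1) with
    | top => rw [hx] at h1; simp at h1
    | coe x =>
        rw [hx, ← WithTop.coe_add, ← WithTop.coe_zero, WithTop.coe_inj] at h1
        have hx0 : x = 0 := by
          rcases lt_trichotomy x 0 with hc | hc | hc
          · exact absurd h1 (ne_of_lt (add_neg hc hc))
          · exact hc
          · exact absurd h1 (ne_of_gt (add_pos hc hc))
        rw [hx0, WithTop.coe_zero]
  calc w.v (-a) = w.v (-1 * a) := by rw [neg_one_mul]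
  _ = w.v a := by rw [w.v_mul, h2, zero_add]

theorem le_v_sum (w : ValOn R Γ) {α : Type*} {γ : WithTop Γ} (s : Finset α) (h : α → R)
    (H : ∀ t ∈ s, γ ≤ w.v (h t)) : γ ≤ w.v (∑ t ∈ s, h t) := by
  classical
  induction s using Finset.induction_on with
  | empty => simp [w.v_zero]
  | insert x s hx ih =>
      rw [Finset.sum_insert hx]
      refine le_trans ?_ (w.min_le_v_add _ _)
      rw [le_min_iff]
      exact ⟨H _ (Finset.mem_insert_self _ _),
        ih fun t ht => H t (Finset.mem_insert_of_mem ht)⟩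

theorem lt_v_sum (w : ValOn R Γ) {α : Type*} {γ : WithTop Γ} (hγ : γ ≠ ⊤) (s : Finset α)
    (h : α → R) (H : ∀ t ∈ s, γ < w.v (h t)) : γ < w.v (∑ t ∈ s, h t) := by
  classical
  induction s using Finset.induction_on with
  | empty => simp [w.v_zero]; exact lt_top_iff_ne_top.mpr hγ
  | insert x s hx ih =>
      rw [Finset.sum_insert hx]
      refine lt_of_lt_of_le ?_ (w.min_le_v_add _ _)
      rw [lt_min_iff]
      exact ⟨H _ (Finset.mem_insert_self _ _),
        ih fun t ht => H t (Finset.mem_insert_of_mem ht)⟩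

/-- The subring `⊕_{γ ∈ Γ} P_γ` of the monoid algebra `R[Γ]`, where
`P_γ = {f : γ ≤ v f}`.  The graded ring `G_v = ⊕_γ P_γ/P_γ⁺` is realized below as the
quotient of this subring by the ideal `⊕_γ P_γ⁺`. -/
def gradedCarrier (w : ValOn R Γ) : Subring (AddMonoidAlgebra R Γ) where
  carrier := {s | ∀ γ : Γ, (γ : WithTop Γ) ≤ w.v (s.coeff γ)}
  zero_mem' := by intro γ; simp [w.v_zero]
  one_mem' := by
    intro γ
    classical
    show (γ : WithTop Γ) ≤ w.v ((AddMonoidAlgebra.single (0:Γ) (1:R)).coeff γ)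
    rw [AddMonoidAlgebra.coeff_single, Finsupp.single_apply]
    split_ifs with h
    · subst h; simp [w.v_one]
    · simp [w.v_zero]
  add_mem' := by
    intro a b ha hb γ
    refine le_trans ?_ (w.min_le_v_add _ _)
    exact le_min (ha γ) (hb γ)
  neg_mem' := by
    intro a ha γ
    show (γ : WithTop Γ) ≤ w.v ((-a).coeff γ)
    rw [AddMonoidAlgebra.coeff_neg, Finsupp.neg_apply, w.v_neg]
    exact ha γ
  mul_mem' := by
    classical
    intro a b ha hb γ
    rw [AddMonoidAlgebra.coeff_mul]
    rw [Finsupp.sum]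
    refine w.le_v_sum _ _ (fun α hα => ?_)
    rw [Finsupp.sum]
    refine w.le_v_sum _ _ (fun β hβ => ?_)
    split_ifs with h
    · subst h
      rw [w.v_mul, WithTop.coe_add]
      exact add_le_add (ha α) (hb β)
    · simp [w.v_zero]

/-- The ideal `⊕_{γ ∈ Γ} P_γ⁺` of `gradedCarrier w`. -/
def gradedIdeal (w : ValOn R Γ) : Ideal (gradedCarrier w) where
  carrier := {s | ∀ γ : Γ, (γ : WithTop Γ) < w.v ((s : AddMonoidAlgebra R Γ).coeff γ)}
  zero_mem' := by intro γ; simp [w.v_zero]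
  add_mem' := by
    intro a b ha hb γ
    refine lt_of_lt_of_le ?_ (w.min_le_v_add _ _)
    exact lt_min (ha γ) (hb γ)
  smul_mem' := by
    classical
    intro c x hx γ
    rw [smul_eq_mul]
    show (γ : WithTop Γ) < w.v (((c : AddMonoidAlgebra R Γ) * (x : AddMonoidAlgebra R Γ)).coeff γ)
    rw [AddMonoidAlgebra.coeff_mul, Finsupp.sum]
    refine w.lt_v_sum (WithTop.coe_ne_top) _ _ (fun α hα => ?_)
    rw [Finsupp.sum]
    refine w.lt_v_sum (WithTop.coe_ne_top) _ _ (fun β hβ => ?_)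
    split_ifs with h
    · subst h
      rw [w.v_mul, WithTop.coe_add]
      exact WithTop.add_lt_add_of_le_of_lt WithTop.coe_ne_top (c.2 α) (hx β)
    · simp [w.v_zero]
end ValOn

/-- The graded ring `G_w = ⊕_{γ} P_γ/P_γ⁺` associated to the valuation `w`,
realized as a quotient. -/
abbrev Graded {R : Type*} [CommRing R] {Γ : Type*} [AddCommGroup Γ] [LinearOrder Γ] [IsOrderedAddMonoid Γ]
    (w : ValOn R Γ) : Type _ :=
  (ValOn.gradedCarrier w) ⧸ (ValOn.gradedIdeal w)

namespace ValOn

variable {R : Type*} [CommRing R] {Γ : Type*} [AddCommGroup Γ] [LinearOrder Γ] [IsOrderedAddMonoid Γ]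

/-- `inv_w f`, the initial form (image of `f` in the homogeneous component
`P_{v f}/P_{v f}⁺` of the graded ring), with `inv_w f = 0` when `f ∈ supp w`. -/
noncomputable def initialForm (w : ValOn R Γ) (f : R) : Graded w :=
  if h : w.v f = ⊤ then 0
  else Ideal.Quotient.mk (gradedIdeal w)
    ⟨AddMonoidAlgebra.single ((w.v f).untop h) f, by
      intro γ
      classical
      show (γ : WithTop Γ) ≤ w.v ((AddMonoidAlgebra.single ((w.v f).untop h) f).coeff γ)
      rw [AddMonoidAlgebra.coeff_single, Finsupp.single_apply]
      split_ifs with hh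
      · rw [← hh, WithTop.coe_untop]
      · simp [w.v_zero]⟩

theorem gradedCarrier_mono {w₁ w₂ : ValOn R Γ} (h : ∀ f, w₁.v f ≤ w₂.v f) :
    gradedCarrier w₁ ≤ gradedCarrier w₂ :=
  fun s hs γ => (hs γ).trans (h _)

/-- The homomorphism `φ : G_{w₁} → G_{w₂}` of graded rings, for `w₁ ≤ w₂`:
it sends `inv_{w₁} f` to `inv_{w₂} f` if `w₁ f = w₂ f` and to `0` if `w₁ f < w₂ f`. -/
noncomputable def phi (w₁ w₂ : ValOn R Γ) (h : ∀ f, w₁.v f ≤ w₂.v f) :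
    Graded w₁ →+* Graded w₂ :=
  Ideal.Quotient.lift (gradedIdeal w₁)
    ((Ideal.Quotient.mk (gradedIdeal w₂)).comp (Subring.inclusion (gradedCarrier_mono h)))
    (by
      intro a ha
      rw [RingHom.comp_apply, Ideal.Quotient.eq_zero_iff_mem]
      exact fun γ => lt_of_lt_of_le (ha γ) (h _))

end ValOn


open ValOn

section PolyDefs

variable {K : Type*} [Field K] {Γ : Type*} [AddCommGroup Γ] [LinearOrder Γ] [IsOrderedAddMonoid Γ]

/-- A polynomial `f` is `𝔳`-stable for a family `𝔳 = (ν_i)_{i ∈ I}` if the values `ν_i(f)`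
eventually stabilize. -/
def Stable {I : Type*} [Preorder I] (ν : I → ValOn (Polynomial K) Γ) (f : Polynomial K) : Prop :=
  ∃ i : I, ∀ j : I, i ≤ j → (ν j).v f = (ν i).v f

/-- The truncation `w_q` of `w` at `q`:
`w_q(f) = min_j w(f_j q^j)` where `f = ∑ f_j q^j` is the `q`-expansion of `f`
(for monic non-constant `q`, the `j`-th coefficient of the `q`-expansion is
`(f /ₘ q^j) %ₘ q`, and all the nonzero coefficients occur for `j ≤ natDegree f`). -/
noncomputable def truncVal (w : ValOn (Polynomial K) Γ) (q f : Polynomial K) : WithTop Γ :=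
  (Finset.range (f.natDegree + 1)).inf' Finset.nonempty_range_add_one
    (fun j => w.v (((f /ₘ q ^ j) %ₘ q) * q ^ j))

/-- `δ(f) = max {ν̄(x - a) : a a root of f}` for a polynomial over an algebraically closed
field, with the convention `δ(f) = ⊥ = -∞` when `f` has no roots (e.g. `deg f = 0`). -/
noncomputable def deltaOf {F : Type*} [Field F] (wbar : ValOn (Polynomial F) Γ)
    (f : Polynomial F) : WithBot (WithTop Γ) :=
  (f.roots.map (fun a => ((wbar.v (X - C a) : WithTop Γ) : WithBot (WithTop Γ)))).sup

/-- `δ(f)` of `f ∈ K[x]`, computed via the fixed extension `ν̄` of `ν` to `K̄[x]`. -/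
noncomputable def delta (wbar : ValOn (Polynomial (AlgebraicClosure K)) Γ)
    (f : Polynomial K) : WithBot (WithTop Γ) :=
  deltaOf wbar (f.map (algebraMap K (AlgebraicClosure K)))

/-- `Q` is a key polynomial (of level `δ(Q)`) for the valuation `ν` (with fixed extension
`ν̄` to `K̄[x]`): `Q` is monic and `δ(f) ≥ δ(Q) → deg f ≥ deg Q` for every nonzero `f`. -/
def IsKeyPoly (wbar : ValOn (Polynomial (AlgebraicClosure K)) Γ) (Q : Polynomial K) : Prop :=
  Q.Monic ∧ ∀ f : Polynomial K, f ≠ 0 → delta wbar Q ≤ delta wbar f → Q.degree ≤ f.degree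

/-- `Ψ_n`: the set of key polynomials of degree `n`. -/
def Psi (wbar : ValOn (Polynomial (AlgebraicClosure K)) Γ) (n : ℕ) : Set (Polynomial K) :=
  {Q | IsKeyPoly wbar Q ∧ Q.natDegree = n}

/-- The set `K_n = {f : ν_Q(f) < ν(f) for all Q ∈ Ψ_n}`. -/
def LimitSet (w : ValOn (Polynomial K) Γ) (wbar : ValOn (Polynomial (AlgebraicClosure K)) Γ)
    (n : ℕ) : Set (Polynomial K) :=
  {f | ∀ Q ∈ Psi wbar n, truncVal w Q f < w.v f}

/-- A limit key polynomial for `Ψ_n`: a monic polynomial in `K_n` of least degree. -/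
def IsLimitKeyPoly (w : ValOn (Polynomial K) Γ)
    (wbar : ValOn (Polynomial (AlgebraicClosure K)) Γ) (n : ℕ) (Qn : Polynomial K) : Prop :=
  Qn.Monic ∧ Qn ∈ LimitSet w wbar n ∧ ∀ g ∈ LimitSet w wbar n, Qn.degree ≤ g.degree

/-- `g` is `𝔳`-stable for the family `𝔳 = (ν_Q)_{Q ∈ Ψ_n}`, ordered by `Q ⪯ Q' ↔ ν_Q ≤ ν_{Q'}`. -/
def PsiStable (w : ValOn (Polynomial K) Γ) (wbar : ValOn (Polynomial (AlgebraicClosure K)) Γ)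
    (n : ℕ) (g : Polynomial K) : Prop :=
  ∃ Q ∈ Psi wbar n, ∀ Q' ∈ Psi wbar n,
    (∀ h : Polynomial K, truncVal w Q h ≤ truncVal w Q' h) → truncVal w Q' g = truncVal w Q g

/-- `v` is a Krull valuation: its support is trivial. -/
def IsKrullVal (v : Polynomial K → WithTop Γ) : Prop :=
  ∀ f : Polynomial K, f ≠ 0 → v f ≠ ⊤

/-- The quotient group `v(K[x])/ν₀K` is a torsion group: every value of `v` has a positive
multiple lying in the value group of `ν₀`. -/
def TorsionOverBase (ν₀ : ValOn K Γ) (v : Polynomial K → WithTop Γ) : Prop :=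
  ∀ f : Polynomial K, f ≠ 0 → ∃ m : ℕ, 0 < m ∧ ∃ a : K, a ≠ 0 ∧ m • v f = ν₀.v a

/-- `v` (a valuation on `K[x]` extending `ν₀`) is residue-transcendental: it is Krull and the
residue field extension `K(x)v ∣ Kν₀` is transcendental, i.e. there are `f, g` with
`v f = v g` whose residue `res(f/g)` is transcendental over `Kν₀`: every polynomial over
`Kν₀` (with coefficients `res(c_i)`, not all zero) does not vanish at `res(f/g)`. -/
def ResidueTranscendental (ν₀ : ValOn K Γ) (v : Polynomial K → WithTop Γ) : Prop :=
  IsKrullVal v ∧ ∃ f g : Polynomial K, f ≠ 0 ∧ g ≠ 0 ∧ v f = v g ∧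
    ∀ (n : ℕ) (c : ℕ → K), (∀ i, 0 ≤ ν₀.v (c i)) → (∃ i, i ≤ n ∧ ν₀.v (c i) = 0) →
      v (∑ i ∈ Finset.range (n + 1), Polynomial.C (c i) * f ^ i * g ^ (n - i)) = v (g ^ n)

/-- `v` is value-transcendental: it is not Krull, or `v(K[x])/ν₀K` is not torsion. -/
def ValueTranscendental (ν₀ : ValOn K Γ) (v : Polynomial K → WithTop Γ) : Prop :=
  ¬ IsKrullVal v ∨ ¬ TorsionOverBase ν₀ v

/-- `v` is valuation-transcendental. -/
def ValuationTranscendental (ν₀ : ValOn K Γ) (v : Polynomial K → WithTop Γ) : Prop :=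
  ValueTranscendental ν₀ v ∨ ResidueTranscendental ν₀ v

/-- `v` is valuation-algebraic. -/
def ValuationAlgebraic (ν₀ : ValOn K Γ) (v : Polynomial K → WithTop Γ) : Prop :=
  ¬ ValuationTranscendental ν₀ v

end PolyDefs


section Statement9Aux

open Polynomial Finset

variable {K : Type*} [Field K] {Γ : Type*} [AddCommGroup Γ] [LinearOrder Γ] [IsOrderedAddMonoid Γ]

private lemma aux_nsmul_ne_top {x : WithTop Γ} (hx : x ≠ ⊤) (n : ℕ) : n • x ≠ ⊤ := by
  induction n with
  | zero => simp
  | succ n ih =>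
      rw [succ_nsmul]
      exact WithTop.add_ne_top.mpr ⟨ih, hx⟩

private lemma aux_nsmul_mono {x y : WithTop Γ} (h : x ≤ y) (n : ℕ) : n • x ≤ n • y := by
  induction n with
  | zero => simp
  | succ n ih => rw [succ_nsmul, succ_nsmul]; exact add_le_add ih h

private lemma aux_nsmul_strict {x y : WithTop Γ} (hx : x ≠ ⊤) (h : x < y) {n : ℕ}
    (hn : n ≠ 0) : n • x < n • y := by
  obtain ⟨m, rfl⟩ := Nat.exists_eq_succ_of_ne_zero hn
  simp only [Nat.succ_eq_add_one]
  by_cases hy : y = ⊤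
  · subst hy
    have h2 : (m + 1) • (⊤ : WithTop Γ) = ⊤ := by rw [succ_nsmul]; exact add_top _
    rw [h2]
    exact lt_top_iff_ne_top.mpr (aux_nsmul_ne_top hx (m + 1))
  · calc (m+1) • x = m • x + x := succ_nsmul x m
      _ ≤ m • y + x := add_le_add (aux_nsmul_mono h.le m) le_rfl
      _ < m • y + y := WithTop.add_lt_add_left (aux_nsmul_ne_top hy m) h
      _ = (m+1) • y := (succ_nsmul y m).symm

private lemma aux_v_pow {R : Type*} [CommRing R] (w : ValOn R Γ) (a : R) (n : ℕ) :
    w.v (a ^ n) = n • w.v a := by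
  induction n with
  | zero => simp [pow_zero, w.v_one]
  | succ n ih => rw [pow_succ, w.v_mul, ih, succ_nsmul]

private lemma aux_v_add_eq_left {R : Type*} [CommRing R] (w : ValOn R Γ) {a b : R}
    (h : w.v a < w.v b) : w.v (a + b) = w.v a := by
  refine le_antisymm ?_ (le_trans (le_min le_rfl h.le) (w.min_le_v_add a b))
  by_contra hlt
  have h1 : w.v a < w.v (a + b) := lt_of_not_ge hlt
  have h2 : w.v a = w.v ((a + b) + (-b)) := by rw [add_neg_cancel_right]
  have h3 : min (w.v (a + b)) (w.v (-b)) ≤ w.v a := by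
    rw [h2]; exact w.min_le_v_add _ _
  rw [w.v_neg] at h3
  exact absurd h3 (not_le.mpr (lt_min h1 h))

private lemma aux_base_ne_top (ν₀ : ValOn K Γ) {a : K} (ha : a ≠ 0) : ν₀.v a ≠ ⊤ := by
  intro h
  have h1 := ν₀.v_mul a a⁻¹
  rw [mul_inv_cancel₀ ha, ν₀.v_one, h, top_add] at h1
  simp at h1

private lemma aux_exists_expansion (φ : Polynomial K) (hm : φ.Monic) (hd : 0 < φ.degree)
    (f : Polynomial K) :
    ∃ (r : ℕ) (c : ℕ → Polynomial K),
      f = ∑ t ∈ Finset.range (r + 1), c t * φ ^ t ∧ ∀ t, (c t).degree < φ.degree := by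
  suffices H : ∀ (n : ℕ) (g : Polynomial K), g.natDegree ≤ n →
      ∃ (r : ℕ) (c : ℕ → Polynomial K),
        g = ∑ t ∈ Finset.range (r + 1), c t * φ ^ t ∧ ∀ t, (c t).degree < φ.degree from
    H f.natDegree f le_rfl
  intro n
  induction n using Nat.strong_induction_on with
  | _ n ih =>
    intro g hg
    by_cases hcase : g.degree < φ.degree
    · refine ⟨0, fun t => if t = 0 then g else 0, by simp, fun t => ?_⟩
      by_cases ht : t = 0
      · simpa [ht] using hcase
      · simpa [ht] using lt_of_le_of_lt bot_le hd
    · have hg0 : g ≠ 0 := by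
        rintro rfl
        exact hcase (lt_of_le_of_lt (by simp) hd)
      have hdiv0 : g /ₘ φ ≠ 0 := by
        intro h0
        have hmd := Polynomial.modByMonic_add_div g φ
        rw [h0, mul_zero, add_zero] at hmd
        exact hcase (hmd ▸ Polynomial.degree_modByMonic_lt g hm)
      have hlt : (g /ₘ φ).degree < g.degree := Polynomial.degree_divByMonic_lt g φ hg0 hd
      have hnat : (g /ₘ φ).natDegree < g.natDegree := Polynomial.natDegree_lt_natDegree hdiv0 hlt
      have hn' : (g /ₘ φ).natDegree < n := lt_of_lt_of_le hnat hg
      obtain ⟨r, c, hsum, hdeg⟩ := ih _ hn' (g /ₘ φ) le_rfl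
      refine ⟨r + 1, fun t => if t = 0 then g %ₘ φ else c (t - 1), ?_, ?_⟩
      · rw [Finset.sum_range_succ']
        simp only [if_pos rfl, pow_zero, mul_one]
        have hcong : ∀ t ∈ Finset.range (r + 1),
            (if t + 1 = 0 then g %ₘ φ else c (t + 1 - 1)) * φ ^ (t + 1)
              = (c t * φ ^ t) * φ := by
          intro t _
          rw [if_neg (Nat.succ_ne_zero t), Nat.add_sub_cancel, pow_succ]
          ring
        rw [Finset.sum_congr rfl hcong, ← Finset.sum_mul, ← hsum, mul_comm, add_comm]
        exact (Polynomial.modByMonic_add_div g φ).symm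
      · intro t
        by_cases ht : t = 0
        · simpa [ht] using Polynomial.degree_modByMonic_lt g hm
        · simpa [ht] using hdeg (t - 1)

private lemma aux_v_sum_ge (w : ValOn (Polynomial K) Γ) (φ : Polynomial K) (r : ℕ)
    (c : ℕ → Polynomial K) :
    (Finset.range (r + 1)).inf' Finset.nonempty_range_add_one
        (fun t => w.v (c t) + t • w.v φ)
      ≤ w.v (∑ t ∈ Finset.range (r + 1), c t * φ ^ t) := by
  refine w.le_v_sum _ _ (fun t ht => ?_)
  rw [w.v_mul, aux_v_pow]
  exact Finset.inf'_le _ ht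

private lemma aux_exact (w w'' : ValOn (Polynomial K) Γ) (hle : ∀ h, w.v h ≤ w''.v h)
    (φ : Polynomial K) (hφ : w.v φ < w''.v φ) (r : ℕ) (c : ℕ → Polynomial K)
    (HA : ∀ t, t ≤ r → w.v (c t) = w''.v (c t)) :
    w.v (∑ t ∈ Finset.range (r + 1), c t * φ ^ t)
      = (Finset.range (r + 1)).inf' Finset.nonempty_range_add_one
          (fun t => w.v (c t) + t • w.v φ) := by
  classical
  set F := ∑ t ∈ Finset.range (r + 1), c t * φ ^ t with hF
  set M := (Finset.range (r + 1)).inf' Finset.nonempty_range_add_one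
    (fun t => w.v (c t) + t • w.v φ) with hM
  refine le_antisymm ?_ (aux_v_sum_ge w φ r c)
  by_contra hgoal
  have hlt : M < w.v F := lt_of_not_ge hgoal
  have hMtop : M ≠ ⊤ := ne_top_of_lt hlt
  have hφtop : w.v φ ≠ ⊤ := ne_top_of_lt hφ
  have hex : ∃ t, t ∈ Finset.range (r + 1) ∧ w.v (c t) + t • w.v φ = M := by
    obtain ⟨t, ht, h⟩ := Finset.exists_mem_eq_inf' (Finset.nonempty_range_add_one)
      (fun t => w.v (c t) + t • w.v φ)
    exact ⟨t, ht, h.symm⟩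
  set t₀ := Nat.find hex with ht₀def
  obtain ⟨ht₀mem, ht₀val⟩ := Nat.find_spec hex
  have ht₀r : t₀ ≤ r := Nat.lt_succ_iff.mp (Finset.mem_range.mp ht₀mem)
  have hct₀ : w.v (c t₀) ≠ ⊤ := by
    intro h
    apply hMtop
    rw [← ht₀val, h, top_add]
  have hbelow : ∀ t, t < t₀ → M < w.v (c t) + t • w.v φ := by
    intro t ht
    have h1 : M ≤ w.v (c t) + t • w.v φ :=
      Finset.inf'_le _ (Finset.mem_range.mpr (by omega))
    have h2 := Nat.find_min hex ht
    exact lt_of_le_of_ne h1 (fun he => h2 ⟨Finset.mem_range.mpr (by omega), he.symm⟩)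
  set A := ∑ t ∈ Finset.range t₀, c t * φ ^ t with hA
  set G := ∑ s ∈ Finset.range (r + 1 - t₀), c (t₀ + s) * φ ^ s with hG
  have hsplit : F = A + φ ^ t₀ * G := by
    have h1 : φ ^ t₀ * G = ∑ s ∈ Finset.range (r + 1 - t₀), c (t₀ + s) * φ ^ (t₀ + s) := by
      rw [hG, Finset.mul_sum]
      refine Finset.sum_congr rfl fun s _ => ?_
      rw [pow_add]; ring
    rw [h1, ← Finset.sum_Ico_eq_sum_range (fun t => c t * φ ^ t) t₀ (r + 1), hF, hA,
      Finset.range_eq_Ico, Finset.range_eq_Ico]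
    exact (Finset.sum_Ico_consecutive (fun t => c t * φ ^ t) (Nat.zero_le t₀)
      (show t₀ ≤ r + 1 by omega)).symm
  have hvA : M < w.v A := by
    refine w.lt_v_sum hMtop _ _ fun t ht => ?_
    rw [w.v_mul, aux_v_pow]
    exact hbelow t (Finset.mem_range.mp ht)
  have hvFG : M < w.v (φ ^ t₀ * G) := by
    have heq : φ ^ t₀ * G = F + (-A) := by rw [hsplit]; ring
    rw [heq]
    refine lt_of_lt_of_le (lt_min hlt ?_) (w.min_le_v_add _ _)
    rw [w.v_neg]; exact hvA
  have hvG : w.v (c t₀) < w.v G := by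
    rw [w.v_mul, aux_v_pow, ← ht₀val, add_comm (w.v (c t₀))] at hvFG
    exact (WithTop.add_lt_add_iff_left (aux_nsmul_ne_top hφtop t₀)).mp hvFG
  have ht₀r' : r + 1 - t₀ = (r - t₀) + 1 := by omega
  set B := ∑ s ∈ Finset.range (r - t₀), c (t₀ + (s + 1)) * φ ^ (s + 1) with hB
  have hGsplit : G = B + c t₀ := by
    rw [hG, ht₀r', Finset.sum_range_succ']
    simp [hB]
  have hvB : w.v (c t₀) < w''.v B := by
    refine w''.lt_v_sum hct₀ _ _ fun s hs => ?_
    have hsr : s < r - t₀ := Finset.mem_range.mp hs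
    rw [w''.v_mul, aux_v_pow, ← HA (t₀ + (s + 1)) (by omega)]
    by_cases hc : w.v (c (t₀ + (s + 1))) = ⊤
    · rw [hc, top_add]; exact lt_top_iff_ne_top.mpr hct₀
    · have h1 : w.v (c t₀) + t₀ • w.v φ
          ≤ w.v (c (t₀ + (s + 1))) + (t₀ + (s + 1)) • w.v φ := by
        rw [ht₀val]
        exact Finset.inf'_le _ (Finset.mem_range.mpr (by omega))
      have h2 : w.v (c t₀) ≤ w.v (c (t₀ + (s + 1))) + (s + 1) • w.v φ := by
        rw [add_nsmul, ← add_assoc, add_right_comm] at h1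
        exact (WithTop.add_le_add_iff_right (aux_nsmul_ne_top hφtop t₀)).mp h1
      have h3 : (s + 1) • w.v φ < (s + 1) • w''.v φ :=
        aux_nsmul_strict hφtop hφ (Nat.succ_ne_zero s)
      calc w.v (c t₀) ≤ w.v (c (t₀ + (s + 1))) + (s + 1) • w.v φ := h2
        _ < w.v (c (t₀ + (s + 1))) + (s + 1) • w''.v φ :=
            (WithTop.add_lt_add_iff_left hc).mpr h3
  have hvG'' : w.v (c t₀) < w''.v G := lt_of_lt_of_le hvG (hle G)
  have hfinal : w.v (c t₀) < w''.v (G + (-B)) := by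
    refine lt_of_lt_of_le (lt_min hvG'' ?_) (w''.min_le_v_add _ _)
    rw [w''.v_neg]; exact hvB
  have hc : c t₀ = G + (-B) := by rw [hGsplit]; ring
  rw [← hc] at hfinal
  exact absurd (HA t₀ ht₀r) (ne_of_lt hfinal)

private lemma aux_min_monic (ν₀ : ValOn K Γ) (w w'' : ValOn (Polynomial K) Γ)
    (hw : ∀ a : K, w.v (Polynomial.C a) = ν₀.v a)
    (hw'' : ∀ a : K, w''.v (Polynomial.C a) = ν₀.v a)
    (hle : ∀ h, w.v h ≤ w''.v h)
    {g : Polynomial K} (hg : w.v g < w''.v g) :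
    ∃ φ : Polynomial K, φ.Monic ∧ 0 < φ.degree ∧ w.v φ < w''.v φ ∧
      ∀ h : Polynomial K, h.degree < φ.degree → w.v h = w''.v h := by
  classical
  have hex : ∃ n, ∃ h : Polynomial K, h.natDegree = n ∧ w.v h < w''.v h :=
    ⟨g.natDegree, g, rfl, hg⟩
  obtain ⟨h₀, hh₀deg, hh₀⟩ := Nat.find_spec hex
  have hh₀0 : h₀ ≠ 0 := by
    rintro rfl
    simp [w.v_zero, w''.v_zero] at hh₀
  have hu0 : h₀.leadingCoeff ≠ 0 := Polynomial.leadingCoeff_ne_zero.mpr hh₀0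
  set φ := h₀ * Polynomial.C h₀.leadingCoeff⁻¹ with hφdef
  have hφm : φ.Monic := Polynomial.monic_mul_leadingCoeff_inv hh₀0
  have hφdeg : φ.degree = h₀.degree := Polynomial.degree_mul_leadingCoeff_inv h₀ hh₀0
  have hvne : ν₀.v h₀.leadingCoeff⁻¹ ≠ ⊤ := aux_base_ne_top ν₀ (inv_ne_zero hu0)
  have hφjump : w.v φ < w''.v φ := by
    rw [hφdef, w.v_mul, w''.v_mul, hw, hw'']
    exact WithTop.add_lt_add_right hvne hh₀
  have hmin : ∀ h : Polynomial K, h.degree < φ.degree → w.v h = w''.v h := by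
    intro h hh
    by_cases h0 : h = 0
    · rw [h0, w.v_zero, w''.v_zero]
    · have hnd : h.natDegree < Nat.find hex := by
        rw [← hh₀deg]
        exact Polynomial.natDegree_lt_natDegree h0 (hφdeg ▸ hh)
      have hnot : ¬ w.v h < w''.v h := fun hc => (Nat.find_min hex hnd) ⟨h, rfl, hc⟩
      exact le_antisymm (hle h) (not_lt.mp hnot)
  have hφpos : 0 < φ.degree := by
    rcases lt_or_ge 0 φ.degree with h | h
    · exact h
    · exfalso
      have h1 : φ.natDegree = 0 := Nat.le_zero.mp (Polynomial.natDegree_le_iff_degree_le.mpr h)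
      have h2 : φ = Polynomial.C (φ.coeff 0) := Polynomial.eq_C_of_natDegree_eq_zero h1
      rw [h2, hw, hw''] at hφjump
      exact lt_irrefl _ hφjump
  exact ⟨φ, hφm, hφpos, hφjump, hmin⟩

private lemma aux_no_plateau (ν₀ : ValOn K Γ) (w w' w'' : ValOn (Polynomial K) Γ)
    (hw : ∀ a : K, w.v (Polynomial.C a) = ν₀.v a)
    (hw'' : ∀ a : K, w''.v (Polynomial.C a) = ν₀.v a)
    (h1 : ∀ h, w.v h ≤ w'.v h) (h2 : ∀ h, w'.v h ≤ w''.v h)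
    {g : Polynomial K} (hg : w.v g < w'.v g)
    {f : Polynomial K} (hff : w.v f = w'.v f) (hjump : w.v f < w''.v f) : False := by
  classical
  have hle : ∀ h, w.v h ≤ w''.v h := fun h => (h1 h).trans (h2 h)
  obtain ⟨φ, hφm, hφpos, hφjump, hA⟩ :=
    aux_min_monic ν₀ w w'' hw hw'' hle (lt_of_lt_of_le hg (h2 g))
  have hA1 : ∀ h : Polynomial K, h.degree < φ.degree → w.v h = w'.v h := by
    intro h hh
    exact le_antisymm (h1 h) (le_trans (h2 h) (le_of_eq (hA h hh).symm))
  have hA2 : ∀ h : Polynomial K, h.degree < φ.degree → w'.v h = w''.v h := by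
    intro h hh
    refine le_antisymm (h2 h) ?_
    rw [← hA h hh]
    exact h1 h
  obtain ⟨r, a, hfsum, hadeg⟩ := aux_exists_expansion φ hφm hφpos f
  have HAf : ∀ t, t ≤ r → w.v (a t) = w''.v (a t) := fun t _ => hA _ (hadeg t)
  have hwval : w.v f = (Finset.range (r + 1)).inf' Finset.nonempty_range_add_one
      (fun t => w.v (a t) + t • w.v φ) := by
    have h := aux_exact w w'' hle φ hφjump r a HAf
    rw [← hfsum] at h
    exact h
  have hwtop : w.v f ≠ ⊤ := ne_top_of_lt hjump
  have hφtop : w.v φ ≠ ⊤ := ne_top_of_lt hφjump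
  have hsand : ∀ t, w.v (a t) = w'.v (a t) := fun t => hA1 _ (hadeg t)
  have hinf' : (Finset.range (r + 1)).inf' Finset.nonempty_range_add_one
      (fun t => w'.v (a t) + t • w'.v φ) = w.v f := by
    refine le_antisymm ?_ ?_
    · rw [hff]
      have h := aux_v_sum_ge w' φ r a
      rw [← hfsum] at h
      exact h
    · rw [hwval]
      refine Finset.le_inf' _ _ fun t ht => ?_
      refine le_trans (Finset.inf'_le _ ht) ?_
      exact add_le_add (le_of_eq (hsand t)) (aux_nsmul_mono (h1 φ) t)
  obtain ⟨ts, htsmem, htsval⟩ := Finset.exists_mem_eq_inf' Finset.nonempty_range_add_one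
    (fun t => w'.v (a t) + t • w'.v φ)
  have hterm : w.v (a ts) + ts • w'.v φ = w.v f := by
    rw [hsand ts, ← htsval, hinf']
  have hwterm : w.v f ≤ w.v (a ts) + ts • w.v φ := by
    rw [hwval]; exact Finset.inf'_le _ htsmem
  have hatop : w.v (a ts) ≠ ⊤ := by
    intro hc
    rw [hc, top_add] at hterm
    exact hwtop hterm.symm
  have hkey : ts • w'.v φ ≤ ts • w.v φ :=
    (WithTop.add_le_add_iff_left hatop).mp (le_trans (le_of_eq hterm) hwterm)
  by_cases ht0 : ts = 0
  · subst ht0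
    have ha0 : w.v (a 0) = w.v f := by
      rw [← hterm, zero_nsmul, add_zero]
    set B := ∑ t ∈ Finset.range r, a (t + 1) * φ ^ (t + 1) with hBdef
    have hsplitf : f = a 0 + B := by
      rw [hfsum, Finset.sum_range_succ', pow_zero, mul_one, add_comm]
    have hB : w''.v (a 0) < w''.v B := by
      rw [← HAf 0 (Nat.zero_le r), ha0]
      refine w''.lt_v_sum hwtop _ _ fun t ht => ?_
      have htr : t < r := Finset.mem_range.mp ht
      rw [w''.v_mul, aux_v_pow, ← HAf (t + 1) (by omega)]
      by_cases hc : w.v (a (t + 1)) = ⊤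
      · rw [hc, top_add]; exact lt_top_iff_ne_top.mpr hwtop
      · calc w.v f ≤ w.v (a (t + 1)) + (t + 1) • w.v φ := by
              rw [hwval]; exact Finset.inf'_le _ (Finset.mem_range.mpr (by omega))
          _ < w.v (a (t + 1)) + (t + 1) • w''.v φ :=
              (WithTop.add_lt_add_iff_left hc).mpr
                (aux_nsmul_strict hφtop hφjump (Nat.succ_ne_zero t))
    have hfval : w''.v f = w.v f := by
      have h4 : w''.v (a 0 + B) = w''.v (a 0) := aux_v_add_eq_left w'' hB
      rw [← hsplitf] at h4
      rw [h4, ← HAf 0 (Nat.zero_le r), ha0]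
    rw [hfval] at hjump
    exact lt_irrefl _ hjump
  · have hφeq : w'.v φ = w.v φ := by
      by_contra hne
      have hlt2 : w.v φ < w'.v φ := lt_of_le_of_ne (h1 φ) (Ne.symm hne)
      exact absurd hkey (not_le.mpr (aux_nsmul_strict hφtop hlt2 ht0))
    obtain ⟨r₂, b, hgsum, hbdeg⟩ := aux_exists_expansion φ hφm hφpos g
    have HAg : ∀ t, t ≤ r₂ → w.v (b t) = w''.v (b t) := fun t _ => hA _ (hbdeg t)
    have HAg' : ∀ t, t ≤ r₂ → w'.v (b t) = w''.v (b t) := fun t _ => hA2 _ (hbdeg t)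
    have e1 := aux_exact w w'' hle φ hφjump r₂ b HAg
    have e2 := aux_exact w' w'' h2 φ (by rw [hφeq]; exact hφjump) r₂ b HAg'
    rw [← hgsum] at e1 e2
    have heq : w.v g = w'.v g := by
      rw [e1, e2]
      refine Finset.inf'_congr Finset.nonempty_range_add_one rfl fun t _ => ?_
      rw [hA1 _ (hbdeg t), hφeq]
    rw [heq] at hg
    exact lt_irrefl _ hg

end Statement9Aux

/-- If `ν_i(f) < μ(f)`, then `ν_i(f) < ν_j(f)` for every `j > i`. -/
theorem value_increases_of_lt_limit
    {K : Type*} [Field K] {Γ : Type*} [AddCommGroup Γ] [LinearOrder Γ] [IsOrderedAddMonoid Γ]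
    {I : Type*} [LinearOrder I] [Nonempty I]
    (ν₀ : ValOn K Γ) (ν : I → ValOn (Polynomial K) Γ)
    (hext : ∀ (i : I) (a : K), (ν i).v (Polynomial.C a) = ν₀.v a)
    (hmono : ∀ i j : I, i ≤ j → ∀ f : Polynomial K, (ν i).v f ≤ (ν j).v f)
    (hstrict : ∀ i j : I, i < j → ∃ f : Polynomial K, (ν i).v f < (ν j).v f)
    (hnomax : ∀ i : I, ∃ j : I, i < j)
    (Q : Polynomial K) (hQmonic : Q.Monic) (hQns : ¬ Stable ν Q)
    (hQmin : ∀ g : Polynomial K, ¬ Stable ν g → Q.degree ≤ g.degree)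
    (γ : WithTop Γ) (hγ : ∀ i : I, (ν i).v Q < γ)
    (μ : ValOn (Polynomial K) Γ)
    (hμext : ∀ a : K, μ.v (Polynomial.C a) = ν₀.v a)
    (hμ : ∀ (f : Polynomial K) (r : ℕ) (c : ℕ → Polynomial K),
      f = ∑ j ∈ Finset.range (r + 1), c j * Q ^ j →
      (∀ j : ℕ, (c j).degree < Q.degree) →
      ∃ i₀ : I, ∀ i : I, i₀ ≤ i →
        μ.v f = (Finset.range (r + 1)).inf' Finset.nonempty_range_add_one
          (fun j => (ν i).v (c j) + j • γ))
    (i : I) (f : Polynomial K) :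
    (ν i).v f < μ.v f → ∀ j : I, i < j → (ν i).v f < (ν j).v f := by
  intro hlt j hij
  classical
  by_contra hnot
  have hw : (ν j).v f = (ν i).v f := le_antisymm (not_lt.mp hnot) (hmono i j hij.le f)
  obtain ⟨g, hg⟩ := hstrict i j hij
  by_cases hjumpcase : ∃ k : I, j ≤ k ∧ (ν i).v f < (ν k).v f
  · obtain ⟨k, hjk, hk⟩ := hjumpcase
    exact aux_no_plateau ν₀ (ν i) (ν j) (ν k) (hext i) (hext k)
      (hmono i j hij.le) (hmono j k hjk) hg hw.symm hk
  · push_neg at hjumpcase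
    have hconst : ∀ k : I, j ≤ k → (ν k).v f = (ν i).v f := fun k hk =>
      le_antisymm (hjumpcase k hk) (hmono i k (hij.le.trans hk) f)
    have hQdegpos : 0 < Q.degree := by
      by_contra hd
      push_neg at hd
      have h1 : Q.natDegree = 0 := Nat.le_zero.mp (Polynomial.natDegree_le_iff_degree_le.mpr hd)
      have h2 : Q = Polynomial.C (Q.coeff 0) := Polynomial.eq_C_of_natDegree_eq_zero h1
      exact hQns ⟨i, fun k _ => by rw [h2, hext k, hext i]⟩
    obtain ⟨r, c, hfsum, hcdeg⟩ := aux_exists_expansion Q hQmonic hQdegpos f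
    obtain ⟨i₀, hi₀⟩ := hμ f r c hfsum hcdeg
    have hstab : ∀ t : ℕ, ∃ s : I, ∀ k : I, s ≤ k → (ν k).v (c t) = (ν s).v (c t) := by
      intro t
      by_contra hns
      exact absurd (hQmin (c t) hns) (not_le.mpr (hcdeg t))
    choose s hs using hstab
    set k₁ : I := (Finset.range (r + 1)).sup' Finset.nonempty_range_add_one s with hk₁
    set k₂ : I := max j (max i₀ k₁) with hk₂
    have hjk₂ : j ≤ k₂ := le_max_left _ _
    have hi₀k₂ : i₀ ≤ k₂ := le_trans (le_max_left i₀ k₁) (le_max_right j _)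
    have hQjump : ∀ k : I, ∃ k' : I, k ≤ k' ∧ (ν k).v Q < (ν k').v Q := by
      intro k
      have hcon : ¬ ∀ k', k ≤ k' → (ν k').v Q = (ν k).v Q := fun hcon => hQns ⟨k, hcon⟩
      push_neg at hcon
      obtain ⟨k', hkk', hne⟩ := hcon
      exact ⟨k', hkk', lt_of_le_of_ne (hmono k k' hkk' Q) hne.symm⟩
    have hstabk : ∀ t : ℕ, t ≤ r → ∀ k : I, k₂ ≤ k → (ν k).v (c t) = (ν (s t)).v (c t) := by
      intro t ht k hk
      refine hs t k (le_trans ?_ hk)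
      have htmem : t ∈ Finset.range (r + 1) := Finset.mem_range.mpr (Nat.lt_succ_of_le ht)
      refine le_trans (Finset.le_sup' s htmem) ?_
      exact le_trans (le_max_right i₀ k₁) (le_max_right j _)
    have hexact : ∀ k : I, k₂ ≤ k →
        (ν k).v f = (Finset.range (r + 1)).inf' Finset.nonempty_range_add_one
          (fun t => (ν k).v (c t) + t • (ν k).v Q) := by
      intro k hk
      obtain ⟨k', hkk', hQk⟩ := hQjump k
      have HA : ∀ t, t ≤ r → (ν k).v (c t) = (ν k').v (c t) := by
        intro t ht
        rw [hstabk t ht k hk, hstabk t ht k' (hk.trans hkk')]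
      have h := aux_exact (ν k) (ν k') (hmono k k' hkk') Q hQk r c HA
      rw [← hfsum] at h
      exact h
    have hmu : μ.v f = (Finset.range (r + 1)).inf' Finset.nonempty_range_add_one
        (fun t => (ν k₂).v (c t) + t • γ) := hi₀ k₂ hi₀k₂
    obtain ⟨k', hkk', hQk⟩ := hQjump k₂
    have hvk₂ : (ν k₂).v f = (ν i).v f := hconst k₂ hjk₂
    have hvk' : (ν k').v f = (ν i).v f := hconst k' (hjk₂.trans hkk')
    obtain ⟨m, hmmem, hmval⟩ := Finset.exists_mem_eq_inf' Finset.nonempty_range_add_one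
      (fun t => (ν k').v (c t) + t • (ν k').v Q)
    have hmr : m ≤ r := Nat.lt_succ_iff.mp (Finset.mem_range.mp hmmem)
    have hfm : (ν i).v f = (ν k').v (c m) + m • (ν k').v Q := by
      rw [← hvk', hexact k' hkk', hmval]
    have hstabm : (ν k').v (c m) = (ν k₂).v (c m) := by
      rw [hstabk m hmr k' hkk', hstabk m hmr k₂ le_rfl]
    by_cases hm0 : m = 0
    · subst hm0
      have h2 : (ν i).v f = (ν k₂).v (c 0) := by
        rw [hfm, hstabm, zero_nsmul, add_zero]
      have h3 : μ.v f ≤ (ν k₂).v (c 0) := by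
        rw [hmu]
        exact le_trans (Finset.inf'_le (fun t => (ν k₂).v (c t) + t • γ)
          (Finset.mem_range.mpr (Nat.succ_pos r))) (by simp)
      rw [← h2] at h3
      exact absurd hlt (not_lt.mpr h3)
    · have hwtop : (ν i).v f ≠ ⊤ := ne_top_of_lt hlt
      have hcmtop : (ν k').v (c m) ≠ ⊤ := fun hc => hwtop (by rw [hfm, hc, top_add])
      have hQtop : (ν k₂).v Q ≠ ⊤ := ne_top_of_lt hQk
      have hle2 : (ν i).v f ≤ (ν k').v (c m) + m • (ν k₂).v Q := by
        rw [← hvk₂, hexact k₂ le_rfl]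
        refine le_trans (Finset.inf'_le _ hmmem) ?_
        rw [hstabm]
      have hstrict2 : (ν k').v (c m) + m • (ν k₂).v Q < (ν k').v (c m) + m • (ν k').v Q :=
        (WithTop.add_lt_add_iff_left hcmtop).mpr (aux_nsmul_strict hQtop hQk hm0)
      rw [← hfm] at hstrict2
      exact absurd hle2 (not_le.mpr hstrict2)
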